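/- Conversely, if nonnegative Puiseux series x₁, …, x_n satisfy the lifted system (x_{i₀} ≤ x_{i₁}+⋯+x_{i_k} for each max-constraint, x_{i₀}² ≤ x_{i₁}x_{i₂} for each average-constraint, x_{i₀} = t^c for each constant-constraint), then (val(x₁),…,val(x_n)) ∈ (ℚ ∪ {-∞})^n is a solution of the original max-average constraint system. -/

import Mathlib

noncomputable section

/-- The field of (generalized) real Puiseux series, modeled as Hahn series over `ℚᵒᵈ`
(so that the leading term has the *largest* exponent, matching the "t large" convention). -/
abbrev K : Type := HahnSeries ℚᵒᵈ ℝ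

/-- The leading coefficient of a Puiseux series (0 for the zero series). -/
noncomputable def leadCoeff (x : K) : ℝ := x.coeff x.order

/-- `x ≥ 0` in the ordered field of Puiseux series: leading coefficient is `≥ 0`. -/
def Knonneg (x : K) : Prop := 0 ≤ leadCoeff x

/-- The order relation on Puiseux series. -/
def Kle (x y : K) : Prop := Knonneg (y - x)

/-- The valuation (leading exponent) of a Puiseux series, `⊥ = -∞` for the zero series. -/
noncomputable def val (x : K) : WithBot ℚ :=
  open scoped Classical in
  if x = 0 then ⊥ else (OrderDual.ofDual x.order : ℚ)

/-- The monomial `t^r`. -/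
noncomputable def tmon (r : ℚ) : K := HahnSeries.single (OrderDual.toDual r) (1 : ℝ)

/-- `t^v` for `v ∈ ℚ ∪ {-∞}`, with `t^{-∞} = 0`. -/
noncomputable def tmonBot (v : WithBot ℚ) : K := WithBot.recBotCoe 0 tmon v

/-- A max-average constraint on variables indexed by `Fin n`. -/
inductive MACon (n : ℕ) where
  /-- `x i₀ ≤ max (x (idx 0), …, x (idx (k-1)))` -/
  | maxC (i₀ : Fin n) (k : ℕ) (idx : Fin k → Fin n) : MACon n
  /-- `x i₀ ≤ (x i₁ + x i₂)/2` -/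
  | avgC (i₀ i₁ i₂ : Fin n) : MACon n
  /-- `x i₀ = c` for a rational constant `c` -/
  | constC (i₀ : Fin n) (c : ℚ) : MACon n

/-- Satisfaction of a max-average constraint over `ℚ ∪ {-∞}`. -/
def SatQ {n : ℕ} (x : Fin n → WithBot ℚ) : MACon n → Prop
  | .maxC i₀ _ idx => x i₀ ≤ Finset.univ.sup (fun j => x (idx j))
  | .avgC i₀ i₁ i₂ => x i₀ ≤ (x i₁ + x i₂).map (fun q => q / 2)
  | .constC i₀ c => x i₀ = (c : WithBot ℚ)

/-- Satisfaction of the lifted constraint over the Puiseux series field. -/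
def SatK {n : ℕ} (y : Fin n → K) : MACon n → Prop
  | .maxC i₀ _ idx => Kle (y i₀) (∑ j, y (idx j))
  | .avgC i₀ i₁ i₂ => Kle ((y i₀) ^ 2) (y i₁ * y i₂)
  | .constC i₀ c => y i₀ = tmon c


lemma val_tmon (c : ℚ) : val (tmon c) = (c : WithBot ℚ) := by
  have h : tmon c ≠ 0 := HahnSeries.single_ne_zero one_ne_zero
  rw [val, if_neg h, tmon, HahnSeries.order_single one_ne_zero]; rfl

lemma val_mul {x y : K} (hx : x ≠ 0) (hy : y ≠ 0) : val (x * y) = val x + val y := by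
  have hxy : x * y ≠ 0 := mul_ne_zero hx hy
  rw [val, val, val, if_neg hx, if_neg hy, if_neg hxy, HahnSeries.order_mul hx hy]
  norm_cast

lemma val_le_val {x y : K} (hx : Knonneg x) (hxy : Kle x y) : val x ≤ val y := by
  by_cases h0 : x = 0
  · simp [val, h0]
  have hl : 0 < leadCoeff x := lt_of_le_of_ne hx (Ne.symm (HahnSeries.coeff_order_eq_zero.not.2 h0))
  by_contra hlt
  push_neg at hlt
  have hyc : y.coeff x.order = 0 := by
    by_cases hy : y = 0
    · simp [hy]
    · apply HahnSeries.coeff_eq_zero_of_lt_order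
      rw [val, val, if_neg h0, if_neg hy] at hlt
      exact_mod_cast hlt
  have hcoeff : (y - x).coeff x.order = - leadCoeff x := by
    rw [HahnSeries.coeff_sub, hyc, leadCoeff]; ring
  have hne : (y - x).coeff x.order ≠ 0 := by rw [hcoeff]; exact neg_ne_zero.mpr hl.ne'
  have hord : (y - x).order = x.order := by
    refine le_antisymm (HahnSeries.order_le_of_coeff_ne_zero hne) ?_
    by_contra hlt2
    push_neg at hlt2
    have hsub0 : y - x ≠ 0 := HahnSeries.ne_zero_of_coeff_ne_zero hne
    have hx0 : x.coeff (y - x).order = 0 := HahnSeries.coeff_eq_zero_of_lt_order hlt2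
    have hy0 : y.coeff (y - x).order = 0 := by
      by_cases hy : y = 0
      · simp [hy]
      · apply HahnSeries.coeff_eq_zero_of_lt_order
        rw [val, val, if_neg h0, if_neg hy] at hlt
        have : x.order < y.order := by exact_mod_cast hlt
        exact hlt2.trans this
    exact HahnSeries.coeff_order_eq_zero.not.2 hsub0 (by rw [HahnSeries.coeff_sub, hx0, hy0, sub_zero])
  have : leadCoeff (y - x) < 0 := by
    rw [leadCoeff, hord, hcoeff]; linarith
  exact absurd hxy (by simpa [Kle, Knonneg] using not_le.mpr this)

lemma val_add_le (x y : K) : val (x + y) ≤ max (val x) (val y) := by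
  by_cases h : x + y = 0
  · simp [val, h]
  have hc := HahnSeries.coeff_order_eq_zero.not.2 h
  rw [HahnSeries.coeff_add] at hc
  have : x.coeff (x + y).order ≠ 0 ∨ y.coeff (x + y).order ≠ 0 := by
    by_contra hcon
    push_neg at hcon
    rw [hcon.1, hcon.2, add_zero] at hc
    exact hc rfl
  rcases this with hx | hy
  · refine le_max_of_le_left ?_
    have hx0 : x ≠ 0 := HahnSeries.ne_zero_of_coeff_ne_zero hx
    have := HahnSeries.order_le_of_coeff_ne_zero hx
    rw [val, val, if_neg h, if_neg hx0]
    exact_mod_cast this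
  · refine le_max_of_le_right ?_
    have hy0 : y ≠ 0 := HahnSeries.ne_zero_of_coeff_ne_zero hy
    have := HahnSeries.order_le_of_coeff_ne_zero hy
    rw [val, val, if_neg h, if_neg hy0]
    exact_mod_cast this

lemma val_sum_le {ι : Type*} (s : Finset ι) (f : ι → K) :
    val (∑ j ∈ s, f j) ≤ s.sup (fun j => val (f j)) := by
  induction s using Finset.cons_induction with
  | empty => simp [val]
  | cons a s ha ih =>
      rw [Finset.sum_cons, Finset.sup_cons]
      exact (val_add_le _ _).trans (max_le_max le_rfl ih)

lemma Knonneg_sq (x : K) : Knonneg (x ^ 2) := by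
  by_cases h : x = 0
  · simp [Knonneg, leadCoeff, h]
  · have hc := HahnSeries.coeff_mul_order_add_order x x
    have ho : (x * x).order = x.order + x.order := HahnSeries.order_mul h h
    rw [sq]
    unfold Knonneg leadCoeff
    rw [ho, hc]
    exact mul_self_nonneg _

/-- if nonnegative Puiseux series satisfy the lifted system, then their
valuations satisfy the original max-average constraint system over `ℚ ∪ {-∞}`. -/
theorem val_solution {n : ℕ} (cs : List (MACon n)) (y : Fin n → K)
    (hnn : ∀ i, Knonneg (y i)) (hsat : ∀ c ∈ cs, SatK y c) :
    ∀ c ∈ cs, SatQ (fun i => val (y i)) c := by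
  intro c hc
  have h := hsat c hc
  cases c with
  | maxC i₀ k idx =>
      simp only [SatK] at h
      simp only [SatQ]
      exact (val_le_val (hnn i₀) h).trans (val_sum_le _ _)
  | avgC i₀ i₁ i₂ =>
      simp only [SatK] at h
      simp only [SatQ]
      have hv := val_le_val (Knonneg_sq (y i₀)) h
      by_cases h0 : y i₀ = 0
      · simp [val, h0]
      by_cases h1 : y i₁ = 0
      · exfalso
        have : val ((y i₀) ^ 2) = ⊥ := le_bot_iff.mp (by simpa [val, h1] using hv)
        have hne : (y i₀) ^ 2 ≠ 0 := pow_ne_zero _ h0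
        rw [val, if_neg hne] at this; exact WithBot.coe_ne_bot this
      by_cases h2 : y i₂ = 0
      · exfalso
        have : val ((y i₀) ^ 2) = ⊥ := le_bot_iff.mp (by simpa [val, h2] using hv)
        have hne : (y i₀) ^ 2 ≠ 0 := pow_ne_zero _ h0
        rw [val, if_neg hne] at this; exact WithBot.coe_ne_bot this
      · rw [sq, val_mul h0 h0, val_mul h1 h2] at hv
        set a : ℚ := OrderDual.ofDual (y i₀).order
        set b : ℚ := OrderDual.ofDual (y i₁).order
        set c : ℚ := OrderDual.ofDual (y i₂).order
        have hva : val (y i₀) = (a : WithBot ℚ) := by rw [val, if_neg h0]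
        have hvb : val (y i₁) = (b : WithBot ℚ) := by rw [val, if_neg h1]
        have hvc : val (y i₂) = (c : WithBot ℚ) := by rw [val, if_neg h2]
        rw [hva, hvb, hvc] at hv ⊢
        rw [← WithBot.coe_add, ← WithBot.coe_add, WithBot.map_coe, WithBot.coe_le_coe] at *
        linarith
  | constC i₀ c =>
      simp only [SatK] at h
      simp only [SatQ, h, val_tmon]
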